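/- arXiv:1403.4301 — 3 statements merged into one kernel-verified Lean document; each statement's English description precedes it below -/
import Mathlib

section
/- Suppose a sequence of positive reals r_n satisfies r_{n+1} = r_n(1 + α/(n+x)) for all n ≥ k, where α > 0, k > 0 are fixed reals and x is a fixed real with n + x > 0 for n ≥ k. Then the sequence r_n / n^α converges to a positive limit as n → ∞. -/
open Filter

lemma aux_log_bound {t : ℝ} (ht : 0 ≤ t) : |Real.log (1 + t) - t| ≤ t ^ 2 := by
  have h1 : (0:ℝ) < 1 + t := by linarith
  have hub : Real.log (1 + t) ≤ t := by
    have := Real.log_le_sub_one_of_pos h1; linarith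
  have h2 : (0:ℝ) < (1 + t)⁻¹ := by positivity
  have h3 := Real.log_le_sub_one_of_pos h2
  rw [Real.log_inv] at h3
  have h4 : (1 + t) * (1 + t)⁻¹ = 1 := mul_inv_cancel₀ (ne_of_gt h1)
  have hlb : t - t ^ 2 ≤ Real.log (1 + t) := by nlinarith
  rw [abs_le]; constructor <;> nlinarith

/-- Lemma 3.1 (Galashin): if positive reals satisfy the recurrence
`r (n+1) = r n * (1 + α/(n+x))` for `n ≥ k`, then `r n / n^α` has a positive limit. -/
theorem stmt_0 (α x : ℝ) (k : ℕ) (r : ℕ → ℝ) (hα : 0 < α) (hk : 0 < k)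
    (hpos : ∀ n, k ≤ n → 0 < r n)
    (hx : ∀ n, k ≤ n → 0 < (n : ℝ) + x)
    (hrec : ∀ n, k ≤ n → r (n + 1) = r n * (1 + α / ((n : ℝ) + x))) :
    ∃ L : ℝ, 0 < L ∧ Tendsto (fun n : ℕ => r n / (n : ℝ) ^ α) atTop (nhds L) := by
  set g : ℕ → ℝ := fun m =>
    Real.log (1 + α / ((m:ℝ) + x)) - α * (Real.log ((m:ℝ) + 1) - Real.log m) with hgdef
  set C : ℝ := 4*α^2 + α + 2*α*|x| with hCdef
  -- eventual bound on g
  have hbound : ∀ᶠ m in atTop, ‖g m‖ ≤ C / (m:ℝ)^2 := by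
    filter_upwards [eventually_ge_atTop (max k (⌈2*|x|⌉₊ + 1))] with m hm
    have hmk : k ≤ m := le_trans (le_max_left _ _) hm
    have hm2 : (⌈2*|x|⌉₊ + 1 : ℕ) ≤ m := le_trans (le_max_right _ _) hm
    have hmx : 0 < (m:ℝ) + x := hx m hmk
    have hm1 : (1:ℕ) ≤ m := le_trans hk hmk
    have hmpos : (0:ℝ) < m := by exact_mod_cast lt_of_lt_of_le hk hmk
    have hmabs : 2*|x| ≤ (m:ℝ) := by
      calc 2*|x| ≤ (⌈2*|x|⌉₊ : ℝ) := Nat.le_ceil _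
        _ ≤ (m:ℝ) := by exact_mod_cast le_trans (Nat.le_succ _) hm2
    have hhalf : (m:ℝ)/2 ≤ (m:ℝ) + x := by
      have : |x| ≥ -x := neg_le_abs x
      linarith
    have hhalfpos : (0:ℝ) < (m:ℝ)/2 := by linarith
    set a : ℝ := α / ((m:ℝ) + x) with hadef
    set b : ℝ := 1 / (m:ℝ) with hbdef
    have ha0 : 0 ≤ a := le_of_lt (div_pos hα hmx)
    have hb0 : 0 ≤ b := le_of_lt (div_pos one_pos hmpos)
    have hlog1 : |Real.log (1 + a) - a| ≤ a^2 := aux_log_bound ha0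
    have hlog2 : |Real.log (1 + b) - b| ≤ b^2 := aux_log_bound hb0
    have hlogsplit : Real.log ((m:ℝ) + 1) - Real.log m = Real.log (1 + b) := by
      rw [← Real.log_div (by linarith) (ne_of_gt hmpos)]
      congr 1
      field_simp [hbdef]
      rw [hbdef, mul_add, mul_one, mul_one_div_cancel (ne_of_gt hmpos)]
    have hga : g m = (Real.log (1 + a) - a) - α * (Real.log (1 + b) - b) + (a - α * b) := by
      rw [hgdef]
      simp only [hlogsplit]
      ring
    have hale : a ≤ 2*α/(m:ℝ) := by
      rw [hadef, div_le_div_iff₀ hmx hmpos]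
      nlinarith
    have hdiff : |a - α * b| ≤ 2*α*|x| / (m:ℝ)^2 := by
      have heq : a - α * b = -(α * x) / ((m:ℝ) * ((m:ℝ)+x)) := by
        rw [hadef, hbdef]; field_simp; ring
      rw [heq, abs_div, abs_neg, abs_mul, abs_of_pos hα,
        abs_of_pos (mul_pos hmpos hmx)]
      rw [div_le_div_iff₀ (by positivity) (by positivity)]
      have h2 : (m:ℝ) * ((m:ℝ)/2) ≤ (m:ℝ) * ((m:ℝ)+x) :=
        mul_le_mul_of_nonneg_left hhalf (le_of_lt hmpos)
      nlinarith [mul_le_mul_of_nonneg_left h2 (by positivity : (0:ℝ) ≤ 2*α*|x|)]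
    have ha2 : a^2 ≤ 4*α^2/(m:ℝ)^2 := by
      have : (2*α/(m:ℝ))^2 = 4*α^2/(m:ℝ)^2 := by ring
      nlinarith
    have hb2 : b^2 = 1/(m:ℝ)^2 := by rw [hbdef]; ring
    calc ‖g m‖ = |(Real.log (1 + a) - a) - α * (Real.log (1 + b) - b) + (a - α * b)| := by
          rw [hga]; rfl
      _ ≤ |Real.log (1 + a) - a| + α * |Real.log (1 + b) - b| + |a - α * b| := by
          have := abs_add_le ((Real.log (1 + a) - a) - α * (Real.log (1 + b) - b)) (a - α * b)
          have h5 := abs_sub (Real.log (1 + a) - a) (α * (Real.log (1 + b) - b))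
          rw [abs_mul, abs_of_pos hα] at h5
          linarith
      _ ≤ 4*α^2/(m:ℝ)^2 + α * (1/(m:ℝ)^2) + 2*α*|x|/(m:ℝ)^2 := by
          have : α * |Real.log (1 + b) - b| ≤ α * (1/(m:ℝ)^2) := by
            apply mul_le_mul_of_nonneg_left _ (le_of_lt hα)
            rw [← hb2]; exact hlog2
          linarith
      _ = C / (m:ℝ)^2 := by rw [hCdef]; ring
  -- summability
  have hsumC : Summable (fun m : ℕ => C / (m:ℝ)^2) := by
    have := (Real.summable_one_div_nat_pow (p := 2)).mpr one_lt_two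
    simpa [div_eq_mul_inv] using this.mul_left C
  have hgsum : Summable g := by
    apply Summable.of_norm_bounded_eventually_nat hsumC hbound
  have hS := hgsum.hasSum.tendsto_sum_nat
  -- telescoping identity
  have key : ∀ n, k ≤ n → Real.log (r n) - α * Real.log n =
      Real.log (r k) - α * Real.log k + ∑ m ∈ Finset.Ico k n, g m := by
    intro n hn
    induction n, hn using Nat.le_induction with
    | base => simp
    | succ n hn ih =>
      have hnx := hx n hn
      have hfac : (0:ℝ) < 1 + α / ((n:ℝ) + x) := by positivity
      have hrn := hpos n hn
      have hlog : Real.log (r (n+1)) = Real.log (r n) + Real.log (1 + α / ((n:ℝ) + x)) := by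
        rw [hrec n hn, Real.log_mul (ne_of_gt hrn) (ne_of_gt hfac)]
      rw [Finset.sum_Ico_succ_top hn, hlog]
      have hcast : ((n+1 : ℕ) : ℝ) = (n:ℝ) + 1 := by push_cast; ring
      rw [hcast]
      have hgn : g n = Real.log (1 + α / ((n:ℝ) + x)) -
          α * (Real.log ((n:ℝ) + 1) - Real.log n) := rfl
      rw [hgn]
      linarith [ih]
  -- limit of log sequence
  set Sk : ℝ := ∑ m ∈ Finset.range k, g m with hSk
  set D : ℝ := Real.log (r k) - α * Real.log k + (∑' m, g m - Sk) with hD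
  have hlogtend : Tendsto (fun n : ℕ => Real.log (r n) - α * Real.log n) atTop (nhds D) := by
    have h1 : Tendsto (fun n : ℕ => Real.log (r k) - α * Real.log k +
        (∑ m ∈ Finset.range n, g m - Sk)) atTop (nhds D) := by
      exact ((hS.sub tendsto_const_nhds).const_add _)
    apply h1.congr'
    filter_upwards [eventually_ge_atTop k] with n hn
    rw [key n hn, Finset.sum_Ico_eq_sub _ hn]
  refine ⟨Real.exp D, Real.exp_pos D, ?_⟩
  have hexp : Tendsto (fun n : ℕ => Real.exp (Real.log (r n) - α * Real.log n)) atTop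
      (nhds (Real.exp D)) := (Real.continuous_exp.continuousAt.tendsto).comp hlogtend
  apply hexp.congr'
  filter_upwards [eventually_ge_atTop k] with n hn
  have hnpos : (0:ℝ) < n := by exact_mod_cast lt_of_lt_of_le hk hn
  rw [Real.exp_sub, Real.exp_log (hpos n hn), Real.rpow_def_of_pos hnpos, mul_comm]
end

section
/- Let (S_n)_{n≥0} be a random walk with S_0 = 0 and independent increments, each centered (mean zero) and bounded in absolute value by 1. For any α > 0 there exists c > 0 such that for every m ≥ 0, the probability that there exists n ≥ 1 with S_n > αn + m is at most c·exp(-αm/c). -/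
open MeasureTheory ProbabilityTheory Real

lemma int_exp_aux {Ω : Type*} [MeasurableSpace Ω] (μ : Measure Ω) [IsProbabilityMeasure μ]
    (X : Ω → ℝ) (hm : Measurable X) (hb : ∀ᵐ ω ∂μ, |X ω| ≤ 1) (t : ℝ) :
    Integrable (fun ω => Real.exp (t * X ω)) μ := by
  refine Integrable.mono' (integrable_const (Real.exp |t|))
    ((hm.const_mul t).exp).aestronglyMeasurable ?_
  filter_upwards [hb] with ω hω
  rw [Real.norm_eq_abs, abs_of_pos (Real.exp_pos _), Real.exp_le_exp]
  calc t * X ω ≤ |t * X ω| := le_abs_self _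
    _ = |t| * |X ω| := abs_mul _ _
    _ ≤ |t| * 1 := by gcongr
    _ = |t| := mul_one _

-- Hoeffding-type mgf bound for a single centered variable bounded by 1
lemma mgf_le_aux {Ω : Type*} [MeasurableSpace Ω] (μ : Measure Ω) [IsProbabilityMeasure μ]
    (X : Ω → ℝ) (hm : Measurable X) (hc : μ[X] = 0) (hb : ∀ᵐ ω ∂μ, |X ω| ≤ 1) (t : ℝ) :
    mgf X μ t ≤ Real.exp (t ^ 2 / 2) := by
  have hXint : Integrable X μ :=
    Integrable.mono' (integrable_const 1) hm.aestronglyMeasurable (by simpa using hb)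
  have hptwise : ∀ᵐ ω ∂μ, Real.exp (t * X ω) ≤ Real.cosh t + X ω * Real.sinh t := by
    filter_upwards [hb] with ω hω
    have h1 : (-1 : ℝ) ≤ X ω := neg_le_of_abs_le hω
    have h2 : X ω ≤ 1 := le_of_abs_le hω
    have key := convexOn_exp.2 (Set.mem_univ (-t)) (Set.mem_univ t)
      (by linarith : (0:ℝ) ≤ (1 - X ω) / 2) (by linarith : (0:ℝ) ≤ (1 + X ω) / 2)
      (by ring)
    have heq : (1 - X ω) / 2 * (-t) + (1 + X ω) / 2 * t = t * X ω := by ring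
    simp only [smul_eq_mul] at key
    rw [heq] at key
    calc Real.exp (t * X ω) ≤ (1 - X ω) / 2 * Real.exp (-t) + (1 + X ω) / 2 * Real.exp t :=
          key
      _ = Real.cosh t + X ω * Real.sinh t := by
          rw [Real.cosh_eq, Real.sinh_eq]; ring
  have hLHSint : Integrable (fun ω => Real.exp (t * X ω)) μ := int_exp_aux μ X hm hb t
  have hRHSint : Integrable (fun ω => Real.cosh t + X ω * Real.sinh t) μ :=
    (integrable_const _).add (hXint.mul_const _)
  have h1 : mgf X μ t ≤ μ[fun ω => Real.cosh t + X ω * Real.sinh t] :=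
    integral_mono_ae hLHSint hRHSint hptwise
  have h2 : μ[fun ω => Real.cosh t + X ω * Real.sinh t] = Real.cosh t := by
    rw [integral_add (integrable_const _) (hXint.mul_const _), integral_const,
      integral_mul_const, hc, probReal_univ]
    simp
  rw [h2] at h1
  exact h1.trans (Real.cosh_le_exp_half_sq t)

/-- Lemma 5.3: for a random walk with independent centered increments bounded by 1,
for any `α > 0` there is `c > 0` so that for all `m ≥ 0`,
`P(∃ n ≥ 1, S_n > α n + m) ≤ c exp(-α m / c)`. -/
theorem stmt_8 {Ω : Type*} [MeasurableSpace Ω] (μ : Measure Ω) [IsProbabilityMeasure μ]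
    (X : ℕ → Ω → ℝ) (hmeas : ∀ i, Measurable (X i))
    (hindep : iIndepFun X μ)
    (hcent : ∀ i, μ[X i] = 0)
    (hbdd : ∀ i, ∀ᵐ ω ∂μ, |X i ω| ≤ 1)
    (S : ℕ → Ω → ℝ) (hS : ∀ n ω, S n ω = ∑ i ∈ Finset.range n, X i ω)
    (α : ℝ) (hα : 0 < α) :
    ∃ c : ℝ, 0 < c ∧ ∀ m : ℝ, 0 ≤ m →
      μ {ω | ∃ n : ℕ, 1 ≤ n ∧ S n ω > α * n + m}
        ≤ ENNReal.ofReal (c * Real.exp (-(α * m) / c)) := by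
  set r : ℝ := Real.exp (-(α ^ 2) / 2) with hr_def
  have hr0 : 0 < r := Real.exp_pos _
  have hr1 : r < 1 := by
    rw [hr_def, Real.exp_lt_one_iff]
    nlinarith
  set c : ℝ := max ((1 - r)⁻¹) 1 with hc_def
  have hc1 : (1 : ℝ) ≤ c := le_max_right _ _
  have hc0 : 0 < c := lt_of_lt_of_le one_pos hc1
  refine ⟨c, hc0, fun m hm => ?_⟩
  -- function equality for S n
  have hSfun : ∀ n, S n = ∑ i ∈ Finset.range n, X i := by
    intro n; funext ω; rw [hS]; simp
  -- per-n tail bound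
  have htail : ∀ n : ℕ, μ {ω | 1 ≤ n ∧ S n ω > α * n + m}
      ≤ ENNReal.ofReal (Real.exp (-(α * m)) * r ^ n) := by
    intro n
    have hsub : {ω | 1 ≤ n ∧ S n ω > α * n + m} ⊆ {ω | α * n + m ≤ S n ω} :=
      fun ω hω => le_of_lt hω.2
    have hint : Integrable (fun ω => Real.exp (α * S n ω)) μ := by
      rw [hSfun]
      exact hindep.integrable_exp_mul_sum hmeas
        (fun i _ => int_exp_aux μ (X i) (hmeas i) (hbdd i) α)
    have hcher := measure_ge_le_exp_mul_mgf (μ := μ) (X := S n) (t := α)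
      (α * n + m) hα.le hint
    have hmgf : mgf (S n) μ α ≤ Real.exp (n * (α ^ 2 / 2)) := by
      rw [hSfun, hindep.mgf_sum hmeas]
      calc ∏ i ∈ Finset.range n, mgf (X i) μ α
          ≤ ∏ i ∈ Finset.range n, Real.exp (α ^ 2 / 2) :=
            Finset.prod_le_prod (fun i _ => mgf_nonneg)
              (fun i _ => mgf_le_aux μ (X i) (hmeas i) (hcent i) (hbdd i) α)
        _ = Real.exp (n * (α ^ 2 / 2)) := by
            rw [Finset.prod_const, ← Real.exp_nat_mul]
            simp [Finset.card_range]
    have hbound : (μ {ω | α * n + m ≤ S n ω}).toReal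
        ≤ Real.exp (-(α * m)) * r ^ n := by
      calc (μ {ω | α * n + m ≤ S n ω}).toReal
          ≤ Real.exp (-α * (α * n + m)) * mgf (S n) μ α := hcher
        _ ≤ Real.exp (-α * (α * n + m)) * Real.exp (n * (α ^ 2 / 2)) := by
            gcongr
        _ = Real.exp (-(α * m)) * r ^ n := by
            rw [hr_def, ← Real.exp_nat_mul, ← Real.exp_add, ← Real.exp_add]
            congr 1; ring
    calc μ {ω | 1 ≤ n ∧ S n ω > α * n + m} ≤ μ {ω | α * n + m ≤ S n ω} :=
          measure_mono hsub
      _ = ENNReal.ofReal ((μ {ω | α * n + m ≤ S n ω}).toReal) :=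
          (ENNReal.ofReal_toReal (measure_ne_top _ _)).symm
      _ ≤ ENNReal.ofReal (Real.exp (-(α * m)) * r ^ n) :=
          ENNReal.ofReal_le_ofReal hbound
  -- union bound
  have hunion : {ω | ∃ n : ℕ, 1 ≤ n ∧ S n ω > α * n + m}
      = ⋃ n : ℕ, {ω | 1 ≤ n ∧ S n ω > α * n + m} := by
    ext ω; simp [Set.mem_iUnion]
  have hsummable : Summable (fun n : ℕ => Real.exp (-(α * m)) * r ^ n) :=
    (summable_geometric_of_lt_one hr0.le hr1).mul_left _
  have htsum : ∑' n : ℕ, Real.exp (-(α * m)) * r ^ n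
      = Real.exp (-(α * m)) * (1 - r)⁻¹ := by
    rw [tsum_mul_left, tsum_geometric_of_lt_one hr0.le hr1]
  calc μ {ω | ∃ n : ℕ, 1 ≤ n ∧ S n ω > α * n + m}
      ≤ ∑' n : ℕ, μ {ω | 1 ≤ n ∧ S n ω > α * n + m} := by
        rw [hunion]; exact measure_iUnion_le _
    _ ≤ ∑' n : ℕ, ENNReal.ofReal (Real.exp (-(α * m)) * r ^ n) :=
        ENNReal.tsum_le_tsum htail
    _ = ENNReal.ofReal (∑' n : ℕ, Real.exp (-(α * m)) * r ^ n) :=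
        (ENNReal.ofReal_tsum_of_nonneg
          (fun n => mul_nonneg (Real.exp_pos _).le (pow_nonneg hr0.le n)) hsummable).symm
    _ ≤ ENNReal.ofReal (c * Real.exp (-(α * m) / c)) := by
        apply ENNReal.ofReal_le_ofReal
        rw [htsum]
        have h1 : (1 - r)⁻¹ ≤ c := le_max_left _ _
        have h2 : Real.exp (-(α * m)) ≤ Real.exp (-(α * m) / c) := by
          rw [Real.exp_le_exp]
          rw [neg_div]
          have : α * m / c ≤ α * m := div_le_self (mul_nonneg hα.le hm) hc1
          linarith
        calc Real.exp (-(α * m)) * (1 - r)⁻¹ = (1 - r)⁻¹ * Real.exp (-(α * m)) := by ring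
          _ ≤ c * Real.exp (-(α * m) / c) :=
            mul_le_mul h1 h2 (Real.exp_pos _).le hc0.le
end

section
/- Consider the random walk T_n = (A_n, B_n) on Z² starting from (A_0, B_0) with A_0 > B_0 ≥ 1, which at each step increments A by 1 with probability A_n/(A_n+B_n) and B by 1 with probability B_n/(A_n+B_n). Then almost surely T_n visits the diagonal {(x,x)} only finitely many times. -/
open MeasureTheory Filter

set_option maxHeartbeats 2000000 in
/-- The Pólya-urn random walk `(A_n, B_n)` started from `A_0 > B_0 ≥ 1` visits the
diagonal `A_n = B_n` only finitely many times, almost surely. -/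
theorem stmt_14 {Ω : Type*} {m0 : MeasurableSpace Ω} (μ : Measure Ω)
    [IsProbabilityMeasure μ] (ℱ : Filtration ℕ m0)
    (A B : ℕ → Ω → ℕ)
    (hAm : ∀ n, Measurable[ℱ n] (A n)) (hBm : ∀ n, Measurable[ℱ n] (B n))
    (a₀ b₀ : ℕ) (hb₀ : 1 ≤ b₀) (hab : b₀ < a₀)
    (hA0 : ∀ ω, A 0 ω = a₀) (hB0 : ∀ ω, B 0 ω = b₀)
    (hstep : ∀ n ω, (A (n + 1) ω = A n ω + 1 ∧ B (n + 1) ω = B n ω) ∨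
      (A (n + 1) ω = A n ω ∧ B (n + 1) ω = B n ω + 1))
    (hcond : ∀ n : ℕ,
      (μ[({ω' | A (n + 1) ω' = A n ω' + 1}).indicator (fun _ => (1 : ℝ)) | ℱ n])
        =ᵐ[μ] fun ω => (A n ω : ℝ) / ((A n ω : ℝ) + (B n ω : ℝ))) :
    ∀ᵐ ω ∂μ, {n : ℕ | A n ω = B n ω}.Finite := by
  classical
  set s₀ : ℕ := a₀ + b₀ with hs₀def
  have hs₀3 : 3 ≤ s₀ := by omega
  have hs₀R : (3:ℝ) ≤ (s₀:ℝ) := by exact_mod_cast hs₀3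
  -- total is deterministic
  have hsum : ∀ n ω, A n ω + B n ω = s₀ + n := by
    intro n
    induction n with
    | zero => intro ω; simp [hA0, hB0, hs₀def]
    | succ n ih =>
      intro ω
      rcases hstep n ω with ⟨h1, h2⟩ | ⟨h1, h2⟩ <;> (have := ih ω; omega)
  -- bounds on A
  have hAub : ∀ n ω, a₀ ≤ A n ω ∧ A n ω ≤ a₀ + n := by
    intro n
    induction n with
    | zero => intro ω; simp [hA0]
    | succ n ih =>
      intro ω
      rcases hstep n ω with ⟨h1, h2⟩ | ⟨h1, h2⟩ <;> (have := ih ω; omega)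
  have hAmeas : ∀ n, Measurable (A n) := fun n => (hAm n).mono (ℱ.le n) le_rfl
  have hRmeas : ∀ n, MeasurableSet {ω | A (n+1) ω = A n ω + 1} := by
    intro n
    have h1 : Measurable fun ω => A n ω + 1 := by
      exact (measurable_from_top (f := fun k : ℕ => k + 1)).comp (hAmeas n)
    exact measurableSet_eq_fun (hAmeas (n+1)) h1
  have hSmeas : ∀ n j, MeasurableSet {ω | A n ω = j} := fun n j =>
    hAmeas n (measurableSet_singleton j)
  have hSmeasF : ∀ n j, MeasurableSet[ℱ n] {ω | A n ω = j} := fun n j =>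
    hAm n (measurableSet_singleton j)
  -- key conditional measure computation
  have key : ∀ n j, (μ ({ω | A n ω = j} ∩ {ω | A (n+1) ω = A n ω + 1})).toReal
      = (j:ℝ)/((s₀:ℝ)+n) * (μ {ω | A n ω = j}).toReal := by
    intro n j
    have hspos : (0:ℝ) < (s₀:ℝ) + n := by positivity
    have hintR : Integrable ({ω | A (n+1) ω = A n ω + 1}.indicator fun _ => (1:ℝ)) μ :=
      (integrable_const (1:ℝ)).indicator (hRmeas n)
    have h1 : ∫ ω in {ω | A n ω = j}, ({ω | A (n+1) ω = A n ω + 1}.indicator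
        fun _ => (1:ℝ)) ω ∂μ = (μ ({ω | A n ω = j} ∩ {ω | A (n+1) ω = A n ω + 1})).toReal := by
      rw [setIntegral_indicator (hRmeas n)]
      simp [setIntegral_const, measureReal_def]
    have h2 := setIntegral_condExp (ℱ.le n) hintR (hSmeasF n j)
    have h3 : (fun ω => (A n ω : ℝ) / ((A n ω : ℝ) + (B n ω : ℝ)))
        = fun ω => (A n ω : ℝ) / ((s₀:ℝ) + n) := by
      funext ω
      have h := hsum n ω
      have : (A n ω : ℝ) + (B n ω : ℝ) = (s₀:ℝ) + n := by exact_mod_cast congrArg Nat.cast h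
      rw [this]
    have h4 : ∫ ω in {ω | A n ω = j},
        (μ[{ω' | A (n+1) ω' = A n ω' + 1}.indicator (fun _ => (1:ℝ))|ℱ n]) ω ∂μ
        = ∫ ω in {ω | A n ω = j}, (A n ω : ℝ) / ((s₀:ℝ) + n) ∂μ :=
      integral_congr_ae (ae_restrict_of_ae ((hcond n).trans (Filter.EventuallyEq.of_eq h3)))
    have h5 : ∫ ω in {ω | A n ω = j}, (A n ω : ℝ) / ((s₀:ℝ) + n) ∂μ
        = (j:ℝ)/((s₀:ℝ)+n) * (μ {ω | A n ω = j}).toReal := by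
      rw [setIntegral_congr_fun (hSmeas n j)
        (g := fun _ => (j:ℝ)/((s₀:ℝ)+n)) (fun ω hω => by rw [show A n ω = j from hω])]
      simp [setIntegral_const, measureReal_def]
      ring
    rw [← h1, ← h2, h4, h5]
  -- uniform bound on the point masses
  have pbound : ∀ n j, (μ {ω | A n ω = j}).toReal ≤ ((s₀:ℝ) - 1)/((s₀:ℝ) - 1 + n) := by
    intro n
    induction n with
    | zero =>
      intro j
      have h1 : (μ {ω | A 0 ω = j}).toReal ≤ 1 := by
        have := prob_le_one (μ := μ) (s := {ω | A 0 ω = j})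
        simpa using ENNReal.toReal_mono (by simp) this
      have h2 : ((s₀:ℝ) - 1)/((s₀:ℝ) - 1 + (0:ℕ)) = 1 := by
        push_cast
        rw [add_zero, div_self (by linarith)]
      rw [h2]; exact h1
    | succ n ih =>
      intro j
      have hspos : (0:ℝ) < (s₀:ℝ) + n := by positivity
      have hs1pos : (0:ℝ) < (s₀:ℝ) - 1 + n := by linarith
      have hBn0 : (0:ℝ) ≤ ((s₀:ℝ) - 1)/((s₀:ℝ) - 1 + n) :=
        div_nonneg (by linarith) (le_of_lt hs1pos)
      match j with
      | 0 =>
        have hempty : {ω | A (n+1) ω = 0} = ∅ := by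
          ext ω
          simp only [Set.mem_setOf_eq, Set.mem_empty_iff_false, iff_false]
          have := hAub (n+1) ω
          omega
        rw [hempty]
        simp only [measure_empty, ENNReal.toReal_zero]
        apply div_nonneg (by linarith)
        push_cast
        linarith
      | (j+1) =>
        set R : Set Ω := {ω | A (n+1) ω = A n ω + 1} with hRdef
        have hsplit : {ω | A (n+1) ω = j+1}
            = ({ω | A n ω = j+1} \ R) ∪ ({ω | A n ω = j} ∩ R) := by
          ext ω
          simp only [Set.mem_setOf_eq, Set.mem_union, Set.mem_diff, Set.mem_inter_iff, hRdef]
          rcases hstep n ω with ⟨h1, _⟩ | ⟨h1, _⟩ <;> omega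
        have hdisj : Disjoint ({ω | A n ω = j+1} \ R) ({ω | A n ω = j} ∩ R) := by
          rw [Set.disjoint_left]
          rintro ω ⟨_, hR⟩ ⟨_, hR'⟩
          exact hR hR'
        have hmeasR : MeasurableSet ({ω | A n ω = j} ∩ R) :=
          (hSmeas n j).inter (hRmeas n)
        have hμadd : (μ {ω | A (n+1) ω = j+1}).toReal
            = (μ ({ω | A n ω = j+1} \ R)).toReal + (μ ({ω | A n ω = j} ∩ R)).toReal := by
          rw [hsplit, measure_union hdisj hmeasR,
            ENNReal.toReal_add (measure_ne_top μ _) (measure_ne_top μ _)]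
        set x := (μ {ω | A n ω = j+1}).toReal with hxdef
        set w := (μ {ω | A n ω = j}).toReal with hwdef
        have hdiff : (μ ({ω | A n ω = j+1} ∩ R)).toReal
            + (μ ({ω | A n ω = j+1} \ R)).toReal = x := by
          rw [← ENNReal.toReal_add (measure_ne_top μ _) (measure_ne_top μ _),
            measure_inter_add_diff _ (hRmeas n)]
        have hkey1 : (μ ({ω | A n ω = j+1} ∩ R)).toReal = ((j:ℝ)+1)/((s₀:ℝ)+n) * x := by
          have := key n (j+1)
          push_cast at this
          exact this
        have hkey2 : (μ ({ω | A n ω = j} ∩ R)).toReal = (j:ℝ)/((s₀:ℝ)+n) * w := key n j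
        have hx0 : 0 ≤ x := ENNReal.toReal_nonneg
        have hw0 : 0 ≤ w := ENNReal.toReal_nonneg
        have hx : x ≤ ((s₀:ℝ) - 1)/((s₀:ℝ) - 1 + n) := ih (j+1)
        have hw : w ≤ ((s₀:ℝ) - 1)/((s₀:ℝ) - 1 + n) := ih j
        have hBmul : ((s₀:ℝ) - 1)/((s₀:ℝ) - 1 + n) * ((s₀:ℝ) - 1 + n) = (s₀:ℝ) - 1 :=
          div_mul_cancel₀ _ (ne_of_gt hs1pos)
        -- emptiness facts
        have hxe : ((j:ℝ)+1) ≤ (s₀:ℝ) + n - 1 ∨ x = 0 := by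
          by_cases hj : j + 1 ≤ a₀ + n
          · left
            have h1 : ((j:ℝ)+1) ≤ (a₀:ℝ) + n := by exact_mod_cast hj
            have h2 : (a₀:ℝ) + 1 ≤ (s₀:ℝ) := by
              have : a₀ + 1 ≤ s₀ := by omega
              exact_mod_cast this
            linarith
          · right
            have hempty : {ω | A n ω = j+1} = ∅ := by
              ext ω
              simp only [Set.mem_setOf_eq, Set.mem_empty_iff_false, iff_false]
              have := hAub n ω
              omega
            rw [hxdef, hempty]; simp
        have hwe : (j:ℝ) ≤ (s₀:ℝ) + n - 1 ∨ w = 0 := by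
          by_cases hj : j ≤ a₀ + n
          · left
            have h1 : (j:ℝ) ≤ (a₀:ℝ) + n := by exact_mod_cast hj
            have h2 : (a₀:ℝ) + 1 ≤ (s₀:ℝ) := by
              have : a₀ + 1 ≤ s₀ := by omega
              exact_mod_cast this
            linarith
          · right
            have hempty : {ω | A n ω = j} = ∅ := by
              ext ω
              simp only [Set.mem_setOf_eq, Set.mem_empty_iff_false, iff_false]
              have := hAub n ω
              omega
            rw [hwdef, hempty]; simp
        -- the numerator inequality
        have hnum : x * ((s₀:ℝ) + n) - ((j:ℝ)+1) * x + (j:ℝ) * w ≤ (s₀:ℝ) - 1 := by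
          have hj0 : (0:ℝ) ≤ (j:ℝ) := Nat.cast_nonneg j
          rcases hxe with hx1 | hx1
          · have c1 : 0 ≤ (s₀:ℝ) + n - ((j:ℝ)+1) := by linarith
            have e1 : x * ((s₀:ℝ) + n - ((j:ℝ)+1))
                ≤ ((s₀:ℝ) - 1)/((s₀:ℝ) - 1 + n) * ((s₀:ℝ) + n - ((j:ℝ)+1)) :=
              mul_le_mul_of_nonneg_right hx c1
            have e2 : (j:ℝ) * w ≤ (j:ℝ) * (((s₀:ℝ) - 1)/((s₀:ℝ) - 1 + n)) :=
              mul_le_mul_of_nonneg_left hw hj0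
            have hcomb : (s₀:ℝ) + n - ((j:ℝ)+1) + (j:ℝ) = (s₀:ℝ) - 1 + n := by ring
            nlinarith [hBmul]
          · rw [hx1]
            rcases hwe with hw1 | hw1
            · have e2 : (j:ℝ) * w ≤ ((s₀:ℝ) + n - 1) * w := by
                apply mul_le_mul_of_nonneg_right hw1 hw0
              have e3 : ((s₀:ℝ) + n - 1) * w
                  ≤ ((s₀:ℝ) + n - 1) * (((s₀:ℝ) - 1)/((s₀:ℝ) - 1 + n)) := by
                apply mul_le_mul_of_nonneg_left hw (by linarith)
              have : ((s₀:ℝ) + n - 1) = ((s₀:ℝ) - 1 + n) := by ring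
              nlinarith [hBmul]
            · rw [hw1]; simp; linarith
        -- put things together
        have ht : (μ {ω | A (n+1) ω = j+1}).toReal
            = x - ((j:ℝ)+1)/((s₀:ℝ)+n) * x + (j:ℝ)/((s₀:ℝ)+n) * w := by
          have hd : (μ ({ω | A n ω = j+1} \ R)).toReal
              = x - (μ ({ω | A n ω = j+1} ∩ R)).toReal := by linarith [hdiff]
          rw [hμadd, hkey2, hd, hkey1]
          try ring
        have hgoal : x - ((j:ℝ)+1)/((s₀:ℝ)+n) * x + (j:ℝ)/((s₀:ℝ)+n) * w
            ≤ ((s₀:ℝ) - 1)/((s₀:ℝ)+n) := by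
          rw [le_div_iff₀ hspos]
          have expand : (x - ((j:ℝ)+1)/((s₀:ℝ)+n) * x + (j:ℝ)/((s₀:ℝ)+n) * w) * ((s₀:ℝ)+n)
              = x * ((s₀:ℝ) + n) - ((j:ℝ)+1) * x + (j:ℝ) * w := by
            field_simp
            try ring
          rw [expand]
          exact hnum
        have hden : ((s₀:ℝ) - 1 + ((n:ℕ)+1:ℕ):ℝ) = (s₀:ℝ) + n := by push_cast; ring
        rw [ht]
        push_cast
        rw [show (s₀:ℝ) - 1 + ((n:ℝ)+1) = (s₀:ℝ)+(n:ℝ) from by ring]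
        exact hgoal
  -- ratio rewrite
  have hratio : ∀ n : ℕ, (fun ω => (A n ω : ℝ) / ((A n ω : ℝ) + (B n ω : ℝ)))
      = fun ω => (A n ω : ℝ) / ((s₀:ℝ) + n) := by
    intro n
    funext ω
    have h := hsum n ω
    have : (A n ω : ℝ) + (B n ω : ℝ) = (s₀:ℝ) + n := by exact_mod_cast congrArg Nat.cast h
    rw [this]
  -- the martingale M n = A n / (s₀ + n)
  set M : ℕ → Ω → ℝ := fun n ω => (A n ω : ℝ)/((s₀:ℝ)+n) with hMdef
  have hcast : ∀ n : ℕ, Measurable (fun k : ℕ => (k:ℝ)) := fun _ => measurable_from_top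
  have hMsm : ∀ n, StronglyMeasurable[ℱ n] (M n) := fun n =>
    ((measurable_from_top.comp (hAm n)).div_const _).stronglyMeasurable
  have hspos' : ∀ n : ℕ, (0:ℝ) < (s₀:ℝ) + n := by
    intro n
    have : (0:ℝ) ≤ (n:ℝ) := Nat.cast_nonneg n
    linarith
  have hMbdd : ∀ n ω, 0 ≤ M n ω ∧ M n ω ≤ 1 := by
    intro n ω
    constructor
    · exact div_nonneg (Nat.cast_nonneg _) (hspos' n).le
    · rw [hMdef]
      rw [div_le_one (hspos' n)]
      have h := (hAub n ω).2
      have h1 : (A n ω : ℝ) ≤ (a₀:ℝ) + n := by exact_mod_cast h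
      have h2 : (a₀:ℝ) + 1 ≤ (s₀:ℝ) := by exact_mod_cast (by omega : a₀ + 1 ≤ s₀)
      linarith
  have hMint : ∀ n, Integrable (M n) μ := by
    intro n
    refine (integrable_const (1:ℝ)).mono'
      (((hMsm n).mono (ℱ.le n)).aestronglyMeasurable) (ae_of_all _ fun ω => ?_)
    rw [Real.norm_eq_abs, abs_of_nonneg (hMbdd n ω).1]
    exact (hMbdd n ω).2
  have hintA : ∀ n, Integrable (fun ω => (A n ω : ℝ)) μ := by
    intro n
    refine (integrable_const ((a₀:ℝ)+(n:ℝ))).mono'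
      ((measurable_from_top.comp (hAmeas n)).aestronglyMeasurable) (ae_of_all _ fun ω => ?_)
    rw [Real.norm_eq_abs, abs_of_nonneg (Nat.cast_nonneg _)]
    exact_mod_cast (hAub n ω).2
  have hMcond : ∀ n, M n =ᵐ[μ] μ[M (n+1)|ℱ n] := by
    intro n
    have hpt : M (n+1) = ((s₀:ℝ)+(n:ℝ)+1)⁻¹ •
        ((fun ω => (A n ω : ℝ)) + {ω' | A (n+1) ω' = A n ω' + 1}.indicator (fun _ => (1:ℝ))) := by
      funext ω
      simp only [hMdef, Pi.smul_apply, Pi.add_apply, smul_eq_mul]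
      rcases hstep n ω with ⟨h1, _⟩ | ⟨h1, _⟩
      · have hmem : ω ∈ {ω' | A (n+1) ω' = A n ω' + 1} := h1
        rw [Set.indicator_of_mem hmem, h1]
        push_cast
        rw [div_eq_inv_mul]
        ring
      · have hmem : ω ∉ {ω' | A (n+1) ω' = A n ω' + 1} := by
          intro hm
          have : A (n+1) ω = A n ω + 1 := hm
          omega
        rw [Set.indicator_of_notMem hmem, h1]
        push_cast
        rw [div_eq_inv_mul]
        ring
    have hA' : μ[(fun ω => (A n ω : ℝ))|ℱ n] = fun ω => (A n ω : ℝ) :=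
      condExp_of_stronglyMeasurable (ℱ.le n)
        ((measurable_from_top.comp (hAm n)).stronglyMeasurable) (hintA n)
    have hind : μ[{ω' | A (n+1) ω' = A n ω' + 1}.indicator (fun _ => (1:ℝ))|ℱ n]
        =ᵐ[μ] fun ω => (A n ω : ℝ)/((s₀:ℝ)+n) :=
      (hcond n).trans (Filter.EventuallyEq.of_eq (hratio n))
    have hce := condExp_smul (μ := μ) (m := ℱ n) (((s₀:ℝ)+(n:ℝ)+1)⁻¹)
      ((fun ω => (A n ω : ℝ)) + {ω' | A (n+1) ω' = A n ω' + 1}.indicator (fun _ => (1:ℝ)))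
    have hadd := condExp_add (μ := μ) (m := ℱ n) (hintA n)
      ((integrable_const (1:ℝ)).indicator (hRmeas n))
    refine Filter.EventuallyEq.symm ?_
    have step1 : μ[M (n+1)|ℱ n] =ᵐ[μ] ((s₀:ℝ)+(n:ℝ)+1)⁻¹ •
        μ[(fun ω => (A n ω : ℝ)) + {ω' | A (n+1) ω' = A n ω' + 1}.indicator (fun _ => (1:ℝ))|ℱ n] := by
      rw [hpt]; exact hce
    have step2 := hadd.const_smul (((s₀:ℝ)+(n:ℝ)+1)⁻¹)
    have step3 : (((s₀:ℝ)+(n:ℝ)+1)⁻¹ •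
        (μ[(fun ω => (A n ω : ℝ))|ℱ n] + μ[{ω' | A (n+1) ω' = A n ω' + 1}.indicator (fun _ => (1:ℝ))|ℱ n]))
        =ᵐ[μ] M n := by
      rw [hA']
      refine (((Filter.EventuallyEq.refl _ (fun ω => (A n ω : ℝ))).add hind).const_smul
        (((s₀:ℝ)+(n:ℝ)+1)⁻¹)).trans (Filter.EventuallyEq.of_eq ?_)
      funext ω
      simp only [Pi.smul_apply, Pi.add_apply, smul_eq_mul, hMdef]
      have h1 : (s₀:ℝ) + n ≠ 0 := (hspos' n).ne'
      have h2 : (s₀:ℝ) + (n:ℝ) + 1 ≠ 0 := by linarith [hspos' n]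
      field_simp
    exact (step1.trans step2).trans step3
  have hadp : StronglyAdapted ℱ M := fun n => hMsm n
  have hmart : Martingale M ℱ μ := martingale_nat hadp hMint hMcond
  have hbddL1 : ∀ n, eLpNorm (M n) 1 μ ≤ ((1 : NNReal) : ENNReal) := by
    intro n
    have h := eLpNorm_le_of_ae_bound (μ := μ) (p := 1) (f := M n) (C := 1)
      (ae_of_all _ fun ω => by
        rw [Real.norm_eq_abs, abs_of_nonneg (hMbdd n ω).1]; exact (hMbdd n ω).2)
    simpa [measure_univ] using h
  have hconv := hmart.submartingale.exists_ae_tendsto_of_bdd hbddL1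
  -- counting estimate
  have hcount : ∀ (ε : ℝ), 0 < ε → ∀ n : ℕ, 1 ≤ n →
      (μ {ω | |M n ω - 1/2| ≤ ε}).toReal
        ≤ (2*ε*((s₀:ℝ)+n)+1) * (((s₀:ℝ)-1)/(((s₀:ℝ)-1)+n)) := by
    intro ε hε n hn
    have hspos : (0:ℝ) < (s₀:ℝ) + n := hspos' n
    set F : Finset ℕ := (Finset.range (a₀+n+1)).filter
      (fun j => |(j:ℝ)/((s₀:ℝ)+n) - 1/2| ≤ ε) with hFdef
    have hsub : {ω | |M n ω - 1/2| ≤ ε} ⊆ ⋃ j ∈ F, {ω | A n ω = j} := by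
      intro ω hω
      exact Set.mem_iUnion₂.mpr ⟨A n ω, Finset.mem_filter.mpr
        ⟨Finset.mem_range.mpr (by have := (hAub n ω).2; omega), hω⟩, rfl⟩
    have hmono : μ {ω | |M n ω - 1/2| ≤ ε} ≤ ∑ j ∈ F, μ {ω | A n ω = j} :=
      le_trans (measure_mono hsub) (measure_biUnion_finset_le F _)
    have htr : (μ {ω | |M n ω - 1/2| ≤ ε}).toReal
        ≤ ∑ j ∈ F, (μ {ω | A n ω = j}).toReal := by
      have hne : (∑ j ∈ F, μ {ω | A n ω = j}) ≠ ⊤ :=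
        (ENNReal.sum_lt_top.mpr fun j _ => measure_lt_top μ _).ne
      have h1 := ENNReal.toReal_mono hne hmono
      rw [ENNReal.toReal_sum (fun j _ => measure_ne_top μ _)] at h1
      exact h1
    have hsumbd : ∑ j ∈ F, (μ {ω | A n ω = j}).toReal
        ≤ (F.card : ℝ) * (((s₀:ℝ)-1)/(((s₀:ℝ)-1)+n)) := by
      have := Finset.sum_le_card_nsmul F (fun j => (μ {ω | A n ω = j}).toReal)
        (((s₀:ℝ)-1)/(((s₀:ℝ)-1)+n)) (fun j _ => pbound n j)
      simpa [nsmul_eq_mul] using this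
    have hcard : (F.card : ℝ) ≤ 2*ε*((s₀:ℝ)+n)+1 := by
      set l : ℕ := ⌈(1/2-ε)*((s₀:ℝ)+n)⌉₊ with hldef
      set u : ℕ := ⌊(1/2+ε)*((s₀:ℝ)+n)⌋₊ with hudef
      have hFIcc : F ⊆ Finset.Icc l u := by
        intro j hj
        rw [hFdef, Finset.mem_filter] at hj
        have habs := abs_le.mp hj.2
        have hjl : (1/2-ε)*((s₀:ℝ)+n) ≤ (j:ℝ) := by
          have := habs.1
          have h2 : (1/2 - ε) ≤ (j:ℝ)/((s₀:ℝ)+n) := by linarith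
          calc (1/2-ε)*((s₀:ℝ)+n) ≤ ((j:ℝ)/((s₀:ℝ)+n))*((s₀:ℝ)+n) :=
                mul_le_mul_of_nonneg_right h2 hspos.le
            _ = (j:ℝ) := by field_simp
        have hju : (j:ℝ) ≤ (1/2+ε)*((s₀:ℝ)+n) := by
          have := habs.2
          have h2 : (j:ℝ)/((s₀:ℝ)+n) ≤ (1/2 + ε) := by linarith
          calc (j:ℝ) = ((j:ℝ)/((s₀:ℝ)+n))*((s₀:ℝ)+n) := by field_simp
            _ ≤ (1/2+ε)*((s₀:ℝ)+n) := mul_le_mul_of_nonneg_right h2 hspos.le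
        rw [Finset.mem_Icc]
        exact ⟨Nat.ceil_le.mpr hjl, Nat.le_floor hju⟩
      have hc1 : F.card ≤ (Finset.Icc l u).card := Finset.card_le_card hFIcc
      rcases le_or_gt l (u+1) with hlu | hlu
      · have hcI : (Finset.Icc l u).card = u + 1 - l := Nat.card_Icc l u
        have hcR : ((Finset.Icc l u).card : ℝ) = (u:ℝ) + 1 - (l:ℝ) := by
          rw [hcI]
          push_cast [Nat.cast_sub hlu]
          ring
        have hu : (u:ℝ) ≤ (1/2+ε)*((s₀:ℝ)+n) := Nat.floor_le (by positivity)
        have hl : (1/2-ε)*((s₀:ℝ)+n) ≤ (l:ℝ) := Nat.le_ceil _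
        have : (F.card : ℝ) ≤ (u:ℝ) + 1 - (l:ℝ) := by
          rw [← hcR]; exact_mod_cast hc1
        nlinarith
      · have : Finset.Icc l u = ∅ := by
          rw [Finset.Icc_eq_empty_iff]
          omega
        have hF0 : F.card = 0 := by
          rw [Finset.card_eq_zero]
          exact Finset.subset_empty.mp (this ▸ hFIcc)
        rw [hF0]
        norm_num
        positivity
    have hBn0 : (0:ℝ) ≤ ((s₀:ℝ)-1)/(((s₀:ℝ)-1)+n) := by
      apply div_nonneg <;> [linarith; linarith [Nat.cast_nonneg (α := ℝ) n]]
    calc (μ {ω | |M n ω - 1/2| ≤ ε}).toReal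
        ≤ (F.card : ℝ) * (((s₀:ℝ)-1)/(((s₀:ℝ)-1)+n)) := le_trans htr hsumbd
      _ ≤ (2*ε*((s₀:ℝ)+n)+1) * (((s₀:ℝ)-1)/(((s₀:ℝ)-1)+n)) :=
          mul_le_mul_of_nonneg_right hcard hBn0
  -- the "eventually near 1/2" sets
  set E : ℕ → ℕ → Set Ω := fun k N => {ω | ∀ n : ℕ, N ≤ n → |M n ω - 1/2| ≤ 1/((k:ℝ)+1)}
    with hEdef
  have hEbound : ∀ k N : ℕ, (μ (E k N)).toReal ≤ 5*((s₀:ℝ)-1)/((k:ℝ)+1) := by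
    intro k N
    set n : ℕ := max N (k+1) with hndef
    have hn1 : 1 ≤ n := le_trans (by omega) (le_max_right N (k+1))
    have hnN : N ≤ n := le_max_left _ _
    have hnk : k + 1 ≤ n := le_max_right _ _
    have hKpos : (0:ℝ) < (k:ℝ)+1 := by positivity
    have hεpos : (0:ℝ) < 1/((k:ℝ)+1) := by positivity
    have hsub : E k N ⊆ {ω | |M n ω - 1/2| ≤ 1/((k:ℝ)+1)} := fun ω hω => hω n hnN
    have h1 : (μ (E k N)).toReal ≤ (μ {ω | |M n ω - 1/2| ≤ 1/((k:ℝ)+1)}).toReal :=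
      ENNReal.toReal_mono (measure_ne_top μ _) (measure_mono hsub)
    have h2 := hcount (1/((k:ℝ)+1)) hεpos n hn1
    refine le_trans h1 (le_trans h2 ?_)
    -- arithmetic
    have hnR : ((k:ℝ)+1) ≤ (n:ℝ) := by exact_mod_cast hnk
    have hn1R : (1:ℝ) ≤ (n:ℝ) := by exact_mod_cast hn1
    have hspos : (0:ℝ) < (s₀:ℝ) + n := hspos' n
    have hs1pos : (0:ℝ) < ((s₀:ℝ)-1) + n := by linarith
    have heq : (2*(1/((k:ℝ)+1))*((s₀:ℝ)+n)+1) * (((s₀:ℝ)-1)/(((s₀:ℝ)-1)+n))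
        = ((2*((s₀:ℝ)+n) + ((k:ℝ)+1)) * ((s₀:ℝ)-1)) / ((((k:ℝ)+1)) * (((s₀:ℝ)-1)+n)) := by
      field_simp
      try ring
    rw [heq, div_le_div_iff₀ (by positivity) hKpos]
    have hfact : 2*((s₀:ℝ)+n) + ((k:ℝ)+1) ≤ 5*(((s₀:ℝ)-1)+n) := by linarith
    nlinarith [mul_le_mul_of_nonneg_right hfact (le_of_lt hKpos), hs1pos,
      mul_le_mul_of_nonneg_left hfact
        (mul_nonneg (by linarith : (0:ℝ) ≤ (s₀:ℝ)-1) (le_of_lt hKpos))]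
  -- the bad set has measure zero
  have hT0 : μ (⋂ k : ℕ, ⋃ N : ℕ, E k N) = 0 := by
    have hmonoE : ∀ k, Monotone (E k) := by
      intro k N N' hNN' ω hω m hm
      exact hω m (le_trans hNN' hm)
    have h1 : ∀ k : ℕ, μ (⋂ k : ℕ, ⋃ N : ℕ, E k N)
        ≤ ENNReal.ofReal (5*((s₀:ℝ)-1)/((k:ℝ)+1)) := by
      intro k
      calc μ (⋂ k : ℕ, ⋃ N : ℕ, E k N) ≤ μ (⋃ N : ℕ, E k N) :=
            measure_mono (Set.iInter_subset _ k)
        _ = ⨆ N, μ (E k N) := ((hmonoE k).directed_le).measure_iUnion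
        _ ≤ ENNReal.ofReal (5*((s₀:ℝ)-1)/((k:ℝ)+1)) := by
            refine iSup_le fun N => ?_
            rw [← ENNReal.ofReal_toReal (measure_ne_top μ (E k N))]
            exact ENNReal.ofReal_le_ofReal (hEbound k N)
    have h2 : ∀ k : ℕ, (μ (⋂ k : ℕ, ⋃ N : ℕ, E k N)).toReal ≤ 5*((s₀:ℝ)-1)/((k:ℝ)+1) := by
      intro k
      exact ENNReal.toReal_le_of_le_ofReal
        (div_nonneg (by linarith) (by positivity)) (h1 k)
    have h3 : (μ (⋂ k : ℕ, ⋃ N : ℕ, E k N)).toReal = 0 := by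
      by_contra hne
      have hpos : 0 < (μ (⋂ k : ℕ, ⋃ N : ℕ, E k N)).toReal :=
        lt_of_le_of_ne ENNReal.toReal_nonneg (Ne.symm hne)
      obtain ⟨k, hk⟩ := exists_nat_gt (5*((s₀:ℝ)-1) / (μ (⋂ k : ℕ, ⋃ N : ℕ, E k N)).toReal)
      have hk1 : 5*((s₀:ℝ)-1) / (μ (⋂ k : ℕ, ⋃ N : ℕ, E k N)).toReal < (k:ℝ)+1 := by
        linarith
      have := h2 k
      rw [div_lt_iff₀ hpos] at hk1
      have hKpos : (0:ℝ) < (k:ℝ)+1 := by positivity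
      rw [le_div_iff₀ hKpos] at this
      nlinarith
    rcases (ENNReal.toReal_eq_zero_iff _).mp h3 with h | h
    · exact h
    · exact absurd h (measure_ne_top μ _)
  -- conclusion
  filter_upwards [hconv, measure_eq_zero_iff_ae_notMem.mp hT0] with ω hc hnT
  by_contra hinf
  obtain ⟨c, hc⟩ := hc
  have hfreq : ∃ᶠ n in atTop, A n ω = B n ω :=
    Nat.frequently_atTop_iff_infinite.mpr hinf
  have hfreq2 : ∃ᶠ n in atTop, M n ω ∈ ({1/2} : Set ℝ) := by
    refine hfreq.mono fun n hn => ?_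
    have hs := hsum n ω
    have h2 : 2 * A n ω = s₀ + n := by omega
    have h2R : 2 * (A n ω : ℝ) = (s₀:ℝ) + n := by exact_mod_cast congrArg Nat.cast h2
    show M n ω = 1/2
    have heq : (A n ω : ℝ)/((s₀:ℝ)+n) = 1/2 := by
      rw [div_eq_iff (hspos' n).ne']
      linarith [h2R]
    exact heq
  have hc2 : c ∈ closure ({1/2} : Set ℝ) :=
    mem_closure_of_frequently_of_tendsto hfreq2 hc
  rw [closure_singleton, Set.mem_singleton_iff] at hc2
  subst hc2
  apply hnT
  refine Set.mem_iInter.mpr fun k => ?_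
  have hεpos : (0:ℝ) < 1/((k:ℝ)+1) := by positivity
  obtain ⟨N, hN⟩ := Metric.tendsto_atTop.mp hc (1/((k:ℝ)+1)) hεpos
  refine Set.mem_iUnion.mpr ⟨N, ?_⟩
  intro n hn
  have := hN n hn
  rw [Real.dist_eq] at this
  exact le_of_lt this
end
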